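/- Let P₀ and P₁ be orthogonal projectors on a finite-dimensional Hilbert space and let ρ be a density operator with Tr(P₀ρ) + Tr(P₁ρ) ≥ 1 + ε for some ε > 0. Then there exists a unit vector |φ₀⟩ in the range of P₀ (so ‖P₀|φ₀⟩‖² = 1) with ‖P₁|φ₀⟩‖² ≥ ε². -/

import Mathlib

open scoped ComplexOrder
open Matrix

noncomputable section

/-- Trace of a product of PSD matrices has nonneg real part. -/
lemma trace_mul_psd_re_nonneg {n : ℕ} {A B : Matrix (Fin n) (Fin n) ℂ}
    (hA : A.PosSemidef) (hB : B.PosSemidef) : 0 ≤ ((A * B).trace).re := by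
  have hex : ∀ M : Matrix (Fin n) (Fin n) ℂ, M.PosSemidef → ∃ C : Matrix (Fin n) (Fin n) ℂ,
      M = Cᴴ * C := by
    intro M hM
    open scoped MatrixOrder in
    obtain ⟨X, hX, -, hXM⟩ := CFC.exists_sqrt_of_isSelfAdjoint_of_quasispectrumRestricts
      hM.isHermitian (QuasispectrumRestricts.nnreal_of_nonneg hM.nonneg)
    exact ⟨X, by rw [← hXM]; exact congrArg (· * X) hX.star_eq.symm⟩
  obtain ⟨C, rfl⟩ := hex A hA
  obtain ⟨D, rfl⟩ := hex B hB
  have key : (Cᴴ * C * (Dᴴ * D)).trace = ((C * Dᴴ)ᴴ * (C * Dᴴ)).trace := by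
    rw [show Cᴴ * C * (Dᴴ * D) = Cᴴ * (C * Dᴴ) * D by noncomm_ring,
      Matrix.trace_mul_cycle]
    congr 1
    simp only [Matrix.conjTranspose_mul, Matrix.conjTranspose_conjTranspose, Matrix.mul_assoc]
  rw [key]
  have h2 : ((C * Dᴴ)ᴴ * (C * Dᴴ)).trace
      = ((∑ i, ∑ j, Complex.normSq ((C * Dᴴ) j i) : ℝ) : ℂ) := by
    push_cast
    simp only [Matrix.trace, Matrix.diag, Matrix.mul_apply, Matrix.conjTranspose_apply,
      Complex.star_def]
    refine Finset.sum_congr rfl fun i _ => Finset.sum_congr rfl fun j _ => ?_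
    rw [← Complex.normSq_eq_conj_mul_self]
  rw [h2, Complex.ofReal_re]
  exact Finset.sum_nonneg fun i _ => Finset.sum_nonneg fun j _ => Complex.normSq_nonneg _

/-- Dot product through a Hermitian matrix. -/
lemma herm_dot {n : ℕ} {P : Matrix (Fin n) (Fin n) ℂ} (hP : P.IsHermitian)
    (x y : Fin n → ℂ) : star (P *ᵥ x) ⬝ᵥ y = star x ⬝ᵥ (P *ᵥ y) := by
  rw [Matrix.star_mulVec, hP.eq, Matrix.dotProduct_mulVec]

/-- If `P₀, P₁` are orthogonal projectors and `ρ` a density operator with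
`Tr(P₀ρ) + Tr(P₁ρ) ≥ 1 + ε`, then there is a unit vector `φ₀` in the range of `P₀`
with `‖P₁ φ₀‖² ≥ ε²`. -/
theorem stmt7 {n : ℕ} (P0 P1 : Matrix (Fin n) (Fin n) ℂ)
    (hP0h : P0.IsHermitian) (hP0p : P0 * P0 = P0)
    (hP1h : P1.IsHermitian) (hP1p : P1 * P1 = P1)
    (ρ : Matrix (Fin n) (Fin n) ℂ) (hρ : ρ.PosSemidef) (htr : ρ.trace = 1)
    (ε : ℝ) (hε : 0 < ε)
    (h : 1 + ε ≤ (P0 * ρ).trace.re + (P1 * ρ).trace.re) :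
    ∃ φ : Fin n → ℂ, (star φ ⬝ᵥ φ) = 1 ∧ P0.mulVec φ = φ ∧
      ε ^ 2 ≤ (star (P1.mulVec φ) ⬝ᵥ P1.mulVec φ).re := by
  have hn : 0 < n := by
    by_contra hn
    push_neg at hn
    interval_cases n
    · simp [Matrix.trace] at htr
  haveI : Nonempty (Fin n) := ⟨⟨0, hn⟩⟩
  set A := P0 + P1 with hAdef
  have hA : A.IsHermitian := hP0h.add hP1h
  obtain ⟨i, -, hi⟩ := Finset.exists_max_image Finset.univ hA.eigenvalues
    ⟨Classical.arbitrary _, Finset.mem_univ _⟩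
  set lam : ℝ := hA.eigenvalues i with hlamdef
  -- PSD of lam • 1 - A
  have hdiag : (Matrix.diagonal (fun j => ((lam - hA.eigenvalues j : ℝ) : ℂ))).PosSemidef := by
    refine Matrix.posSemidef_diagonal_iff.mpr fun j => ?_
    rw [Complex.zero_le_real]
    have := hi j (Finset.mem_univ j)
    linarith
  have hU : (hA.eigenvectorUnitary : Matrix (Fin n) (Fin n) ℂ) *
      star (hA.eigenvectorUnitary : Matrix (Fin n) (Fin n) ℂ) = 1 :=
    Matrix.mem_unitaryGroup_iff.mp hA.eigenvectorUnitary.2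
  have hdd : Matrix.diagonal (fun j => ((lam - hA.eigenvalues j : ℝ) : ℂ))
      = (lam : ℂ) • (1 : Matrix (Fin n) (Fin n) ℂ)
        - Matrix.diagonal (RCLike.ofReal ∘ hA.eigenvalues) := by
    ext j k
    by_cases hjk : j = k
    · subst hjk; simp [Matrix.diagonal_apply_eq, Complex.ofReal_sub]
    · simp [Matrix.diagonal_apply_ne _ hjk, Matrix.one_apply_ne hjk]
  have hBpsd : ((lam : ℂ) • (1 : Matrix (Fin n) (Fin n) ℂ) - A).PosSemidef := by
    have h2 := hdiag.mul_mul_conjTranspose_same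
      (hA.eigenvectorUnitary : Matrix (Fin n) (Fin n) ℂ)
    have heq : (hA.eigenvectorUnitary : Matrix (Fin n) (Fin n) ℂ) *
        Matrix.diagonal (fun j => ((lam - hA.eigenvalues j : ℝ) : ℂ)) *
        (hA.eigenvectorUnitary : Matrix (Fin n) (Fin n) ℂ)ᴴ
        = (lam : ℂ) • 1 - A := by
      rw [hdd, Matrix.mul_sub, Matrix.sub_mul, Matrix.mul_smul, mul_one, Matrix.smul_mul]
      rw [show (hA.eigenvectorUnitary : Matrix (Fin n) (Fin n) ℂ)ᴴ
        = star (hA.eigenvectorUnitary : Matrix (Fin n) (Fin n) ℂ) from rfl, hU]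
      conv_rhs => rw [hA.spectral_theorem, Unitary.conjStarAlgAut_apply]
    rw [heq] at h2
    exact h2
  -- trace bound: lam ≥ 1 + ε
  have htrB : 0 ≤ ((((lam : ℂ) • (1 : Matrix (Fin n) (Fin n) ℂ) - A) * ρ).trace).re :=
    trace_mul_psd_re_nonneg hBpsd hρ
  have htr2 : (((lam : ℂ) • (1 : Matrix (Fin n) (Fin n) ℂ) - A) * ρ).trace
      = (lam : ℂ) - ((P0 * ρ).trace + (P1 * ρ).trace) := by
    rw [Matrix.sub_mul, Matrix.trace_sub, Matrix.smul_mul, one_mul, Matrix.trace_smul,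
      htr, hAdef, Matrix.add_mul, Matrix.trace_add]
    simp
  have hlam : 1 + ε ≤ lam := by
    rw [htr2] at htrB
    simp only [Complex.sub_re, Complex.add_re, Complex.ofReal_re] at htrB
    linarith
  have hlam1 : (1 : ℝ) < lam := by linarith
  -- eigenvector
  set ψ : Fin n → ℂ := ⇑(hA.eigenvectorBasis i) with hψdef
  have hψA : A *ᵥ ψ = (lam : ℂ) • ψ := by
    have h0 := hA.mulVec_eigenvectorBasis i
    funext j
    have h1 := congrFun h0 j
    simpa [Complex.real_smul] using h1
  have hψ1 : star ψ ⬝ᵥ ψ = 1 := by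
    have horth := hA.eigenvectorBasis.orthonormal.1 i
    have : (inner ℂ (hA.eigenvectorBasis i) (hA.eigenvectorBasis i) : ℂ) = 1 := by
      rw [inner_self_eq_norm_sq_to_K, horth]; norm_num
    rw [EuclideanSpace.inner_eq_star_dotProduct] at this
    rw [dotProduct_comm] at this
    exact this
  set w : Fin n → ℂ := P0 *ᵥ ψ with hwdef
  set v : Fin n → ℂ := P1 *ᵥ ψ with hvdef
  have hwv : w + v = (lam : ℂ) • ψ := by
    rw [hwdef, hvdef, ← Matrix.add_mulVec, ← hAdef, hψA]
  have hP0w : P0 *ᵥ w = w := by rw [hwdef, Matrix.mulVec_mulVec, hP0p]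
  have hP1v : P1 *ᵥ v = v := by rw [hvdef, Matrix.mulVec_mulVec, hP1p]
  set a : ℂ := star ψ ⬝ᵥ w with hadef
  set b : ℂ := star ψ ⬝ᵥ v with hbdef
  have hww : star w ⬝ᵥ w = a := by
    rw [hadef, hwdef, herm_dot hP0h, Matrix.mulVec_mulVec, hP0p]
  have hvv : star v ⬝ᵥ v = b := by
    rw [hbdef, hvdef, herm_dot hP1h, Matrix.mulVec_mulVec, hP1p]
  have hab : a + b = (lam : ℂ) := by
    rw [hadef, hbdef, ← dotProduct_add, hwv, dotProduct_smul, hψ1,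
      smul_eq_mul, mul_one]
  have hweq : w = (lam : ℂ) • ψ - v := eq_sub_of_add_eq hwv
  have hveq : v = (lam : ℂ) • ψ - w := eq_sub_of_add_eq (by rwa [add_comm] at hwv)
  have hP1w : P1 *ᵥ w = ((lam : ℂ) - 1) • v := by
    rw [hweq, Matrix.mulVec_sub, Matrix.mulVec_smul, ← hvdef, hP1v, sub_smul, one_smul]
  have hP0v : P0 *ᵥ v = ((lam : ℂ) - 1) • w := by
    rw [hveq, Matrix.mulVec_sub, Matrix.mulVec_smul, ← hwdef, hP0w, sub_smul, one_smul]
  have hwvdot : star w ⬝ᵥ v = ((lam : ℂ) - 1) * a := by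
    rw [hwdef, herm_dot hP0h, hP0v, dotProduct_smul, ← hadef, smul_eq_mul]
  have hvwdot : star v ⬝ᵥ w = ((lam : ℂ) - 1) * b := by
    rw [hvdef, herm_dot hP1h, hP1w, dotProduct_smul, ← hbdef, smul_eq_mul]
  have hconj : star v ⬝ᵥ w = star (star w ⬝ᵥ v) := Matrix.star_dotProduct _ _
  have hba : b = star a := by
    rw [hvwdot, hwvdot, star_mul', star_sub, star_one] at hconj
    have hlamstar : star ((lam : ℂ)) = (lam : ℂ) := Complex.conj_ofReal lam
    rw [hlamstar] at hconj
    have hne : (lam : ℂ) - 1 ≠ 0 := by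
      intro hcon
      have : (lam : ℂ) = 1 := by linear_combination hcon
      have := congrArg Complex.re this
      simp at this
      linarith
    field_simp at hconj
    exact hconj
  have hareal : a = star a := by
    have h3 := Matrix.star_dotProduct w w
    rw [hww] at h3
    exact h3
  have haeq : a = b := by rw [hba, ← hareal]
  have ha2 : (2 : ℂ) * a = (lam : ℂ) := by rw [← hab, ← haeq]; ring
  have haval : a = ((lam / 2 : ℝ) : ℂ) := by
    push_cast
    field_simp
    linear_combination ha2
  have hlampos : (0 : ℝ) < lam / 2 := by linarith
  -- the candidate vector
  set c : ℝ := Real.sqrt (2 / lam) with hcdef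
  have hc2 : (c : ℝ) ^ 2 = 2 / lam := Real.sq_sqrt (by positivity)
  have hlamne : lam ≠ 0 := by linarith
  have hone : 2 / lam * (lam / 2) = (1 : ℝ) := by field_simp
  refine ⟨(c : ℂ) • w, ?_, ?_, ?_⟩
  · rw [star_smul, smul_dotProduct, dotProduct_smul, hww, haval,
      show star (c : ℂ) = (c : ℂ) from Complex.conj_ofReal c, smul_eq_mul, smul_eq_mul,
      show (c : ℂ) * ((c : ℂ) * ((lam / 2 : ℝ) : ℂ)) = (((c ^ 2 * (lam / 2) : ℝ)) : ℂ) from by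
        push_cast; ring,
      hc2, hone, Complex.ofReal_one]
  · rw [Matrix.mulVec_smul, hP0w]
  · rw [Matrix.mulVec_smul, hP1w, smul_smul, star_smul, smul_dotProduct,
      dotProduct_smul, hvv, ← haeq, haval]
    have hstar : star ((c : ℂ) * ((lam : ℂ) - 1)) = (c : ℂ) * ((lam : ℂ) - 1) := by
      simp [star_mul', Complex.conj_ofReal]
    rw [hstar, smul_eq_mul, smul_eq_mul,
      show (c : ℂ) * ((lam : ℂ) - 1) * ((c : ℂ) * ((lam : ℂ) - 1) * ((lam / 2 : ℝ) : ℂ))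
        = (((c ^ 2 * (lam / 2) * (lam - 1) ^ 2 : ℝ)) : ℂ) from by push_cast; ring,
      hc2, hone, one_mul, Complex.ofReal_re]
    nlinarith [hlam, hε]
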